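/- Fix ε ∈ (0, 1/2], an integer m ≥ 1, d ∈ [0,1], α > 0, and δ₁, δ₂ ∈ (0,1). Write t = tanh(ε/2). Let X_1, …, X_m be i.i.d. Bernoulli(d); conditionally on X, let b_1, …, b_m be independent with b_i ~ Bernoulli((1/2)(1 − t) + t·X_i); let L be an independent real random variable with Laplace(0, 1/(εm)) distribution; and define d̃ = (1/t)·((1/m)·Σ_{i=1}^m b_i − (1/2)(1 − t)) + L. Then P(|d̃ − d| ≥ α) ≤ 2·exp(−2mα²(1−δ₁)²) + 2·exp(−2m·t²·α²δ₁²(1−δ₂)²) + exp(−εmαδ₁δ₂). -/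

import Mathlib

set_option maxHeartbeats 1000000
open Real Set


open MeasureTheory ProbabilityTheory

/-- The law of a `Laplace(0, b)` random variable: the measure on `ℝ` with density
`x ↦ (1/(2b))·exp(−|x|/b)` with respect to Lebesgue measure. -/
noncomputable def laplaceMeasure (b : ℝ) : Measure ℝ :=
  volume.withDensity fun x => ENNReal.ofReal (1 / (2 * b) * Real.exp (-|x| / b))

-- Hoeffding's lemma core
lemma lemA (p : ℝ) (hp0 : 0 ≤ p) (hp1 : p ≤ 1) (x : ℝ) :
    (1 - p) + p * Real.exp x ≤ Real.exp (p * x + x ^ 2 / 8) := by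
  set D : ℝ → ℝ := fun y => (1 - p) + p * Real.exp y with hDdef
  have hD : ∀ y, 0 < D y := by
    intro y
    rcases eq_or_lt_of_le hp0 with h | h
    · simp [hDdef, ← h]
    · have : 0 < p * Real.exp y := mul_pos h (exp_pos y)
      have h1 : 0 ≤ 1 - p := by linarith
      simp only [hDdef]; linarith
  have hDd : ∀ y, HasDerivAt D (p * Real.exp y) y := by
    intro y
    rw [hDdef]; exact (((Real.hasDerivAt_exp y).const_mul p).const_add (1 - p))
  set G : ℝ → ℝ := fun y => p * y + y ^ 2 / 8 - Real.log (D y) with hGdef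
  set G' : ℝ → ℝ := fun y => p + y / 4 - p * Real.exp y / D y with hG'def
  have hGd : ∀ y, HasDerivAt G (G' y) y := by
    intro y
    have h1 : HasDerivAt (fun y => Real.log (D y)) (p * Real.exp y / D y) y :=
      (hDd y).log (hD y).ne'
    have hpow : HasDerivAt (fun y : ℝ => y ^ 2 / 8) ((2 : ℕ) * y ^ (2 - 1) / 8) y :=
      (hasDerivAt_pow 2 y).div_const 8
    have hlin : HasDerivAt (fun y : ℝ => p * y) (p * 1) y := (hasDerivAt_id y).const_mul p
    have := (hlin.add hpow).sub h1
    refine this.congr_deriv ?_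
    simp only [hG'def]; push_cast; ring
  have hG'd : ∀ y, HasDerivAt G' (1 / 4 - p * Real.exp y * (1 - p) / (D y) ^ 2) y := by
    intro y
    have hu : HasDerivAt (fun y => p * Real.exp y) (p * Real.exp y) y :=
      (Real.hasDerivAt_exp y).const_mul p
    have hdiv : HasDerivAt (fun y => p * Real.exp y / D y)
        ((p * Real.exp y * D y - p * Real.exp y * (p * Real.exp y)) / (D y) ^ 2) y :=
      hu.div (hDd y) (hD y).ne'
    have h2 : HasDerivAt (fun y : ℝ => p + y / 4) (1 / 4) y := by
      simpa using ((hasDerivAt_id y).div_const 4).const_add p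
    have := h2.sub hdiv
    refine this.congr_deriv ?_
    have : p * Real.exp y * D y - p * Real.exp y * (p * Real.exp y)
        = p * Real.exp y * (1 - p) := by simp only [hDdef]; ring
    rw [this]
  have hG'' : ∀ y, 0 ≤ 1 / 4 - p * Real.exp y * (1 - p) / (D y) ^ 2 := by
    intro y
    rw [sub_nonneg, div_le_iff₀ (pow_pos (hD y) 2)]
    have : (D y) ^ 2 - 4 * (p * Real.exp y * (1 - p)) = ((1 - p) - p * Real.exp y) ^ 2 := by
      simp only [hDdef]; ring
    nlinarith [sq_nonneg ((1 - p) - p * Real.exp y)]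
  have hG'mono : Monotone G' :=
    monotone_of_deriv_nonneg (fun y => (hG'd y).differentiableAt)
      (fun y => by rw [(hG'd y).deriv]; exact hG'' y)
  have hG'0 : G' 0 = 0 := by simp [hG'def, hDdef]
  have hG0 : G 0 = 0 := by simp [hGdef, hDdef]
  have hGnonneg : ∀ y, 0 ≤ G y := by
    intro y
    rcases le_total 0 y with h | h
    · have : MonotoneOn G (Set.Ici 0) := by
        apply monotoneOn_of_deriv_nonneg (convex_Ici 0)
          (Continuous.continuousOn (by
            have : ∀ z, DifferentiableAt ℝ G z := fun z => (hGd z).differentiableAt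
            exact (Differentiable.continuous this)))
          (fun z hz => ((hGd z).differentiableAt).differentiableWithinAt)
        intro z hz
        rw [(hGd z).deriv]
        rw [interior_Ici, Set.mem_Ioi] at hz
        calc (0:ℝ) = G' 0 := hG'0.symm
        _ ≤ G' z := hG'mono hz.le
      have := this (Set.self_mem_Ici) (Set.mem_Ici.2 h) h
      rwa [hG0] at this
    · have : AntitoneOn G (Set.Iic 0) := by
        apply antitoneOn_of_deriv_nonpos (convex_Iic 0)
          (Continuous.continuousOn (by
            have : ∀ z, DifferentiableAt ℝ G z := fun z => (hGd z).differentiableAt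
            exact (Differentiable.continuous this)))
          (fun z hz => ((hGd z).differentiableAt).differentiableWithinAt)
        intro z hz
        rw [(hGd z).deriv]
        rw [interior_Iic, Set.mem_Iio] at hz
        calc G' z ≤ G' 0 := hG'mono hz.le
        _ = 0 := hG'0
      have := this (Set.mem_Iic.2 h) (Set.self_mem_Iic) h
      rwa [hG0] at this
  have := hGnonneg x
  have hlog : Real.log (D x) ≤ p * x + x ^ 2 / 8 := by
    simp only [hGdef] at this; linarith
  calc D x = Real.exp (Real.log (D x)) := (Real.exp_log (hD x)).symm
  _ ≤ Real.exp (p * x + x ^ 2 / 8) := Real.exp_le_exp.2 hlog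


lemma chernoff {Ω : Type*} [MeasurableSpace Ω] (P : Measure Ω) [IsProbabilityMeasure P]
    {m : ℕ} (hm : 0 < m) (Y : Fin m → Ω → ℝ) (hmeas : ∀ i, Measurable (Y i))
    (hindep : iIndepFun Y P)
    (hint : ∀ i (l : ℝ), Integrable (fun ω => Real.exp (l * Y i ω)) P)
    (hmgf : ∀ i (l : ℝ), mgf (Y i) P l ≤ Real.exp (l ^ 2 / 8))
    (s : ℝ) (hs : 0 ≤ s) :
    P {ω | s ≤ ∑ i, Y i ω} ≤ ENNReal.ofReal (Real.exp (-2 * s ^ 2 / m)) := by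
  set l : ℝ := 4 * s / m with hl
  have hl0 : 0 ≤ l := by positivity
  have hintsum : Integrable (fun ω => Real.exp (l * (∑ i, Y i) ω)) P :=
    hindep.integrable_exp_mul_sum hmeas (fun i _ => hint i l)
  have hbound := measure_ge_le_exp_mul_mgf (X := ∑ i, Y i) (μ := P) s hl0 hintsum
  have hsum_eq : {ω | s ≤ (∑ i, Y i) ω} = {ω | s ≤ ∑ i, Y i ω} := by
    ext ω; simp [Finset.sum_apply]
  have hmgfsum : mgf (∑ i, Y i) P l = ∏ i, mgf (Y i) P l :=
    hindep.mgf_sum hmeas Finset.univ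
  have hprod : ∏ i : Fin m, mgf (Y i) P l ≤ Real.exp (m * (l ^ 2 / 8)) := by
    calc ∏ i : Fin m, mgf (Y i) P l ≤ ∏ _i : Fin m, Real.exp (l ^ 2 / 8) :=
          Finset.prod_le_prod (fun i _ => mgf_nonneg) (fun i _ => hmgf i l)
    _ = Real.exp (m * (l ^ 2 / 8)) := by
          rw [Finset.prod_const, ← Real.exp_nat_mul]; simp
  have hfinal : Real.exp (-l * s) * mgf (∑ i, Y i) P l ≤ Real.exp (-2 * s ^ 2 / m) := by
    calc Real.exp (-l * s) * mgf (∑ i, Y i) P l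
        ≤ Real.exp (-l * s) * Real.exp (m * (l ^ 2 / 8)) := by
          rw [hmgfsum]; exact mul_le_mul_of_nonneg_left hprod (exp_pos _).le
    _ = Real.exp (-l * s + m * (l ^ 2 / 8)) := (Real.exp_add _ _).symm
    _ = Real.exp (-2 * s ^ 2 / m) := by
          congr 1
          have hm' : (m : ℝ) ≠ 0 := Nat.cast_ne_zero.2 hm.ne'
          rw [hl]; field_simp
          ring
  rw [← hsum_eq]
  refine ENNReal.le_ofReal_iff_toReal_le (measure_ne_top _ _) (exp_pos _).le |>.2 ?_
  exact hbound.trans hfinal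


lemma integral_four {Ω : Type*} [MeasurableSpace Ω] (P : Measure Ω) [IsProbabilityMeasure P]
    (X b : Ω → ℝ) (hXm : Measurable X) (hbm : Measurable b)
    (hX01 : ∀ ω, X ω = 0 ∨ X ω = 1) (hb01 : ∀ ω, b ω = 0 ∨ b ω = 1)
    (g : ℝ → ℝ → ℝ) :
    ∫ ω, g (X ω) (b ω) ∂P
      = g 1 1 * (P {ω | X ω = 1 ∧ b ω = 1}).toReal
      + g 1 0 * (P {ω | X ω = 1 ∧ b ω = 0}).toReal
      + g 0 1 * (P {ω | X ω = 0 ∧ b ω = 1}).toReal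
      + g 0 0 * (P {ω | X ω = 0 ∧ b ω = 0}).toReal := by
  have hmeas : ∀ u v : ℝ, MeasurableSet {ω | X ω = u ∧ b ω = v} := by
    intro u v
    have : {ω | X ω = u ∧ b ω = v} = X ⁻¹' {u} ∩ b ⁻¹' {v} := by
      ext ω
      simp only [Set.mem_setOf_eq, Set.mem_inter_iff, Set.mem_preimage, Set.mem_singleton_iff]
    rw [this]
    exact (hXm (measurableSet_singleton u)).inter (hbm (measurableSet_singleton v))
  have hpt : ∀ ω, g (X ω) (b ω)
      = ({ω | X ω = 1 ∧ b ω = 1}.indicator (fun _ => g 1 1) ω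
        + {ω | X ω = 1 ∧ b ω = 0}.indicator (fun _ => g 1 0) ω)
        + ({ω | X ω = 0 ∧ b ω = 1}.indicator (fun _ => g 0 1) ω
        + {ω | X ω = 0 ∧ b ω = 0}.indicator (fun _ => g 0 0) ω) := by
    intro ω
    rcases hX01 ω with hx | hx <;> rcases hb01 ω with hb | hb <;>
      simp [Set.indicator_apply, Set.mem_setOf_eq, hx, hb]
  have hint : ∀ u v : ℝ, Integrable
      ({ω | X ω = u ∧ b ω = v}.indicator (fun _ => g u v)) P :=
    fun u v => (integrable_const (g u v)).indicator (hmeas u v)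
  calc ∫ ω, g (X ω) (b ω) ∂P
      = ∫ ω, (({ω | X ω = 1 ∧ b ω = 1}.indicator (fun _ => g 1 1) ω
        + {ω | X ω = 1 ∧ b ω = 0}.indicator (fun _ => g 1 0) ω)
        + ({ω | X ω = 0 ∧ b ω = 1}.indicator (fun _ => g 0 1) ω
        + {ω | X ω = 0 ∧ b ω = 0}.indicator (fun _ => g 0 0) ω)) ∂P :=
        integral_congr_ae (Filter.Eventually.of_forall hpt)
    _ = _ := by
        have e1 := integral_add (μ := P) (hint 1 1) (hint 1 0)
        have e2 := integral_add (μ := P) (hint 0 1) (hint 0 0)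
        have e3 := integral_add (μ := P) ((hint 1 1).add (hint 1 0)) ((hint 0 1).add (hint 0 0))
        simp only [Pi.add_apply] at e1 e2 e3
        rw [e3, e1, e2, integral_indicator_const _ (hmeas 1 1),
          integral_indicator_const _ (hmeas 1 0),
          integral_indicator_const _ (hmeas 0 1), integral_indicator_const _ (hmeas 0 0)]
        simp only [smul_eq_mul, measureReal_def]
        ring



lemma lemB (p l : ℝ) (hp0 : 0 ≤ p) (hp1 : p ≤ 1) :
    p * Real.exp (l * (1 - p)) + (1 - p) * Real.exp (-(l * p)) ≤ Real.exp (l ^ 2 / 8) := by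
  have h := lemA p hp0 hp1 l
  calc p * Real.exp (l * (1 - p)) + (1 - p) * Real.exp (-(l * p))
      = Real.exp (-(l * p)) * ((1 - p) + p * Real.exp l) := by
        rw [show l * (1 - p) = -(l * p) + l by ring, Real.exp_add]; ring
    _ ≤ Real.exp (-(l * p)) * Real.exp (p * l + l ^ 2 / 8) :=
        mul_le_mul_of_nonneg_left h (exp_pos _).le
    _ = Real.exp (l ^ 2 / 8) := by rw [← Real.exp_add]; congr 1; ring


lemma mgf_bounds {Ω : Type*} [MeasurableSpace Ω] (P : Measure Ω) [IsProbabilityMeasure P]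
    (X b : Ω → ℝ) (hXm : Measurable X) (hbm : Measurable b)
    (hX01 : ∀ ω, X ω = 0 ∨ X ω = 1) (hb01 : ∀ ω, b ω = 0 ∨ b ω = 1)
    (d t : ℝ) (hd0 : 0 ≤ d) (hd1 : d ≤ 1) (ht0 : 0 ≤ t) (ht1 : t ≤ 1)
    (hXdist : P {ω | X ω = 1} = ENNReal.ofReal d)
    (hj1 : P {ω | X ω = 1 ∧ b ω = 1} = ENNReal.ofReal (d * ((1/2) * (1+t))))
    (hj0 : P {ω | X ω = 0 ∧ b ω = 1} = ENNReal.ofReal ((1-d) * ((1/2) * (1-t)))) :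
    (∀ l : ℝ, mgf (fun ω => X ω - d) P l ≤ Real.exp (l^2/8)) ∧
    (∀ l : ℝ, mgf (fun ω => b ω - ((1/2)*(1-t) + t * X ω)) P l ≤ Real.exp (l^2/8)) := by
  -- nonnegativity facts
  have h11 : (0:ℝ) ≤ d * ((1/2) * (1+t)) := by nlinarith
  have h10 : (0:ℝ) ≤ d * ((1/2) * (1-t)) := by nlinarith
  have h01 : (0:ℝ) ≤ (1-d) * ((1/2) * (1-t)) := by nlinarith
  have h00 : (0:ℝ) ≤ (1-d) * ((1/2) * (1+t)) := by nlinarith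
  -- set measurability
  have hmeas : ∀ u v : ℝ, MeasurableSet {ω | X ω = u ∧ b ω = v} := by
    intro u v
    have : {ω | X ω = u ∧ b ω = v} = X ⁻¹' {u} ∩ b ⁻¹' {v} := by
      ext ω
      simp only [Set.mem_setOf_eq, Set.mem_inter_iff, Set.mem_preimage, Set.mem_singleton_iff]
    rw [this]
    exact (hXm (measurableSet_singleton u)).inter (hbm (measurableSet_singleton v))
  have hXmeas1 : MeasurableSet {ω | X ω = 1} := hXm (measurableSet_singleton 1)
  -- P(A10)
  have hA10 : P {ω | X ω = 1 ∧ b ω = 0} = ENNReal.ofReal (d * ((1/2) * (1-t))) := by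
    have hsplit : {ω | X ω = 1} = {ω | X ω = 1 ∧ b ω = 1} ∪ {ω | X ω = 1 ∧ b ω = 0} := by
      ext ω
      simp only [Set.mem_setOf_eq, Set.mem_union]
      rcases hb01 ω with h | h <;> simp [h] <;> tauto
    have hdisj : Disjoint {ω | X ω = 1 ∧ b ω = 1} {ω | X ω = 1 ∧ b ω = 0} := by
      rw [Set.disjoint_left]
      rintro ω ⟨_, h1⟩ ⟨_, h0⟩
      rw [h1] at h0; norm_num at h0
    have h1 : ENNReal.ofReal d = ENNReal.ofReal (d * ((1/2) * (1+t))) +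
        P {ω | X ω = 1 ∧ b ω = 0} := by
      rw [← hj1, ← hXdist, hsplit, measure_union hdisj (hmeas 1 0)]
    have h2 : ENNReal.ofReal d = ENNReal.ofReal (d * ((1/2) * (1+t))) +
        ENNReal.ofReal (d * ((1/2) * (1-t))) := by
      rw [← ENNReal.ofReal_add h11 h10]
      congr 1; ring
    rw [h2] at h1
    exact ((ENNReal.add_right_inj ENNReal.ofReal_ne_top).1 h1).symm
  -- P(X = 0)
  have hX0 : P {ω | X ω = 0} = ENNReal.ofReal (1 - d) := by
    have hc : {ω | X ω = 0} = {ω | X ω = 1}ᶜ := by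
      ext ω
      simp only [Set.mem_setOf_eq, Set.mem_compl_iff]
      rcases hX01 ω with h | h <;> simp [h]
    rw [hc, measure_compl hXmeas1 (measure_ne_top _ _), hXdist, measure_univ,
      ← ENNReal.ofReal_one, ← ENNReal.ofReal_sub _ hd0]
  -- P(A00)
  have hA00 : P {ω | X ω = 0 ∧ b ω = 0} = ENNReal.ofReal ((1-d) * ((1/2) * (1+t))) := by
    have hsplit : {ω | X ω = 0} = {ω | X ω = 0 ∧ b ω = 1} ∪ {ω | X ω = 0 ∧ b ω = 0} := by
      ext ω
      simp only [Set.mem_setOf_eq, Set.mem_union]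
      rcases hb01 ω with h | h <;> simp [h] <;> tauto
    have hdisj : Disjoint {ω | X ω = 0 ∧ b ω = 1} {ω | X ω = 0 ∧ b ω = 0} := by
      rw [Set.disjoint_left]
      rintro ω ⟨_, h1⟩ ⟨_, h0⟩
      rw [h1] at h0; norm_num at h0
    have h1 : ENNReal.ofReal (1-d) = ENNReal.ofReal ((1-d) * ((1/2) * (1-t))) +
        P {ω | X ω = 0 ∧ b ω = 0} := by
      rw [← hj0, ← hX0, hsplit, measure_union hdisj (hmeas 0 0)]
    have h2 : ENNReal.ofReal (1-d) = ENNReal.ofReal ((1-d) * ((1/2) * (1-t))) +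
        ENNReal.ofReal ((1-d) * ((1/2) * (1+t))) := by
      rw [← ENNReal.ofReal_add h01 h00]
      congr 1; ring
    rw [h2] at h1
    exact ((ENNReal.add_right_inj ENNReal.ofReal_ne_top).1 h1).symm
  have key : ∀ g : ℝ → ℝ → ℝ, ∫ ω, g (X ω) (b ω) ∂P
      = g 1 1 * (d * ((1/2) * (1+t))) + g 1 0 * (d * ((1/2) * (1-t)))
      + g 0 1 * ((1-d) * ((1/2) * (1-t))) + g 0 0 * ((1-d) * ((1/2) * (1+t))) := by
    intro g
    rw [integral_four P X b hXm hbm hX01 hb01 g, hj1, hA10, hj0, hA00,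
      ENNReal.toReal_ofReal h11, ENNReal.toReal_ofReal h10,
      ENNReal.toReal_ofReal h01, ENNReal.toReal_ofReal h00]
  constructor
  · intro l
    have hk := key (fun x _ => Real.exp (l * (x - d)))
    have : mgf (fun ω => X ω - d) P l = ∫ ω, Real.exp (l * (X ω - d)) ∂P := rfl
    rw [this, hk]
    have hB := lemB d l hd0 hd1
    have e1 : l * (1 - d) = l * (1 - d) := rfl
    have e2 : l * (0 - d) = -(l * d) := by ring
    rw [e2]
    calc Real.exp (l * (1 - d)) * (d * (1 / 2 * (1 + t))) +
          Real.exp (l * (1 - d)) * (d * (1 / 2 * (1 - t))) +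
          Real.exp (-(l * d)) * ((1 - d) * (1 / 2 * (1 - t))) +
          Real.exp (-(l * d)) * ((1 - d) * (1 / 2 * (1 + t)))
        = d * Real.exp (l * (1 - d)) + (1 - d) * Real.exp (-(l * d)) := by ring
      _ ≤ Real.exp (l ^ 2 / 8) := hB
  · intro l
    have hk := key (fun x y => Real.exp (l * (y - ((1/2)*(1-t) + t * x))))
    have : mgf (fun ω => b ω - ((1/2)*(1-t) + t * X ω)) P l
        = ∫ ω, Real.exp (l * (b ω - ((1/2)*(1-t) + t * X ω))) ∂P := rfl
    rw [this, hk]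
    have hp1 : (0:ℝ) ≤ (1+t)/2 := by linarith
    have hp1' : (1+t)/2 ≤ 1 := by linarith
    have hp2 : (0:ℝ) ≤ (1-t)/2 := by linarith
    have hp2' : (1-t)/2 ≤ 1 := by linarith
    have hB1 := lemB ((1+t)/2) l hp1 hp1'
    have hB2 := lemB ((1-t)/2) l hp2 hp2'
    have e11 : l * (1 - ((1/2)*(1-t) + t * 1)) = l * (1 - (1+t)/2) := by ring
    have e10 : l * (0 - ((1/2)*(1-t) + t * 1)) = -(l * ((1+t)/2)) := by ring
    have e01 : l * (1 - ((1/2)*(1-t) + t * 0)) = l * (1 - (1-t)/2) := by ring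
    have e00 : l * (0 - ((1/2)*(1-t) + t * 0)) = -(l * ((1-t)/2)) := by ring
    rw [e11, e10, e01, e00]
    calc Real.exp (l * (1 - (1+t)/2)) * (d * (1 / 2 * (1 + t))) +
          Real.exp (-(l * ((1+t)/2))) * (d * (1 / 2 * (1 - t))) +
          Real.exp (l * (1 - (1-t)/2)) * ((1 - d) * (1 / 2 * (1 - t))) +
          Real.exp (-(l * ((1-t)/2))) * ((1 - d) * (1 / 2 * (1 + t)))
        = d * ((1+t)/2 * Real.exp (l * (1 - (1+t)/2)) + (1 - (1+t)/2) * Real.exp (-(l * ((1+t)/2))))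
        + (1 - d) * ((1-t)/2 * Real.exp (l * (1 - (1-t)/2)) + (1 - (1-t)/2) * Real.exp (-(l * ((1-t)/2)))) := by
          ring
      _ ≤ d * Real.exp (l ^ 2 / 8) + (1 - d) * Real.exp (l ^ 2 / 8) := by
          have h1 : (0:ℝ) ≤ d := hd0
          have h2 : (0:ℝ) ≤ 1 - d := by linarith
          exact add_le_add (mul_le_mul_of_nonneg_left hB1 h1) (mul_le_mul_of_nonneg_left hB2 h2)
      _ = Real.exp (l ^ 2 / 8) := by ring



lemma int_exp_bdd {Ω : Type*} [MeasurableSpace Ω] (P : Measure Ω) [IsProbabilityMeasure P]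
    (Y : Ω → ℝ) (hmeas : Measurable Y) (hbdd : ∀ ω, |Y ω| ≤ 2) (l : ℝ) :
    Integrable (fun ω => Real.exp (l * Y ω)) P := by
  refine Integrable.mono' (integrable_const (Real.exp (|l| * 2)))
    ((hmeas.const_mul l).exp.aestronglyMeasurable)
    (Filter.Eventually.of_forall fun ω => ?_)
  rw [Real.norm_eq_abs, abs_of_pos (exp_pos _)]
  apply Real.exp_le_exp.2
  calc l * Y ω ≤ |l * Y ω| := le_abs_self _
    _ = |l| * |Y ω| := abs_mul _ _
    _ ≤ |l| * 2 := mul_le_mul_of_nonneg_left (hbdd ω) (abs_nonneg l)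

lemma chernoff_abs {Ω : Type*} [MeasurableSpace Ω] (P : Measure Ω) [IsProbabilityMeasure P]
    {m : ℕ} (hm : 0 < m) (Y : Fin m → Ω → ℝ) (hmeas : ∀ i, Measurable (Y i))
    (hindep : iIndepFun Y P)
    (hbdd : ∀ i ω, |Y i ω| ≤ 2)
    (hmgf : ∀ i (l : ℝ), mgf (Y i) P l ≤ Real.exp (l ^ 2 / 8))
    (s : ℝ) (hs : 0 ≤ s) :
    P {ω | s ≤ |∑ i, Y i ω|} ≤ ENNReal.ofReal (2 * Real.exp (-2 * s ^ 2 / m)) := by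
  set nY : Fin m → Ω → ℝ := fun i ω => -Y i ω with hnY
  have hnmeas : ∀ i, Measurable (nY i) := fun i => (hmeas i).neg
  have hnindep : iIndepFun nY P :=
    hindep.comp (fun _ (x : ℝ) => -x) (fun _ => measurable_neg)
  have hnbdd : ∀ i ω, |nY i ω| ≤ 2 := fun i ω => by
    rw [hnY]; simpa [abs_neg] using hbdd i ω
  have hnmgf : ∀ i (l : ℝ), mgf (nY i) P l ≤ Real.exp (l ^ 2 / 8) := by
    intro i l
    have h1 : nY i = -(Y i) := rfl
    rw [h1, mgf_neg]
    simpa [neg_pow] using hmgf i (-l)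
  have hsub : {ω | s ≤ |∑ i, Y i ω|} ⊆ {ω | s ≤ ∑ i, Y i ω} ∪ {ω | s ≤ ∑ i, nY i ω} := by
    intro ω hω
    rw [Set.mem_setOf_eq] at hω
    rcases le_abs.1 hω with h | h
    · exact Or.inl h
    · refine Or.inr ?_
      rw [Set.mem_setOf_eq, hnY]
      simpa [Finset.sum_neg_distrib] using h
  calc P {ω | s ≤ |∑ i, Y i ω|} ≤ P ({ω | s ≤ ∑ i, Y i ω} ∪ {ω | s ≤ ∑ i, nY i ω}) :=
        measure_mono hsub
    _ ≤ P {ω | s ≤ ∑ i, Y i ω} + P {ω | s ≤ ∑ i, nY i ω} := measure_union_le _ _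
    _ ≤ ENNReal.ofReal (Real.exp (-2 * s ^ 2 / m)) + ENNReal.ofReal (Real.exp (-2 * s ^ 2 / m)) :=
        add_le_add
          (chernoff P hm Y hmeas hindep (fun i l => int_exp_bdd P (Y i) (hmeas i) (hbdd i) l) hmgf s hs)
          (chernoff P hm nY hnmeas hnindep (fun i l => int_exp_bdd P (nY i) (hnmeas i) (hnbdd i) l) hnmgf s hs)
    _ = ENNReal.ofReal (2 * Real.exp (-2 * s ^ 2 / m)) := by
        rw [← ENNReal.ofReal_add (exp_pos _).le (exp_pos _).le]
        congr 1; ring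



lemma laplace_piece (b : ℝ) (hb : 0 < b) (c : ℝ) (hc : 0 < c) :
    ∫⁻ x in Ici c, ENNReal.ofReal (1 / (2 * b) * Real.exp (-|x| / b))
      = ENNReal.ofReal (1 / 2 * Real.exp (-c / b)) := by
  have h1 : ∀ x ∈ Ici c, ENNReal.ofReal (1 / (2 * b) * Real.exp (-|x| / b))
      = ENNReal.ofReal (1 / (2 * b) * Real.exp (-(1 / b) * x)) := by
    intro x hx
    rw [mem_Ici] at hx
    rw [abs_of_pos (lt_of_lt_of_le hc hx)]
    ring_nf
  rw [setLIntegral_congr_fun measurableSet_Ici h1]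
  rw [setLIntegral_congr Ioi_ae_eq_Ici.symm]
  have hint : IntegrableOn (fun x => 1 / (2 * b) * Real.exp (-(1 / b) * x)) (Ioi c) :=
    (exp_neg_integrableOn_Ioi c (by positivity)).const_mul _
  rw [← ofReal_integral_eq_lintegral_ofReal hint
    (Filter.Eventually.of_forall fun x => by positivity)]
  congr 1
  rw [MeasureTheory.integral_const_mul]
  have : ∀ x : ℝ, Real.exp (-(1 / b) * x) = (fun y => Real.exp (-y)) (b⁻¹ * x) := by
    intro x; simp [one_div]
  calc 1 / (2 * b) * ∫ x in Ioi c, Real.exp (-(1 / b) * x)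
      = 1 / (2 * b) * ∫ x in Ioi c, (fun y => Real.exp (-y)) (b⁻¹ * x) := by
        congr 1; exact integral_congr_ae (Filter.Eventually.of_forall fun x => this x)
    _ = 1 / (2 * b) * ((b⁻¹)⁻¹ • ∫ x in Ioi (b⁻¹ * c), Real.exp (-x)) := by
        rw [integral_comp_mul_left_Ioi (fun y => Real.exp (-y)) c (inv_pos.2 hb)]
    _ = 1 / 2 * Real.exp (-c / b) := by
        rw [integral_exp_neg_Ioi, inv_inv, smul_eq_mul]
        have h2 : -(b⁻¹ * c) = -c / b := by field_simp
        rw [h2]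
        field_simp

lemma laplace_tail (b : ℝ) (hb : 0 < b) (c : ℝ) (hc : 0 < c) :
    laplaceMeasure b {x : ℝ | c ≤ |x|} ≤ ENNReal.ofReal (Real.exp (-c / b)) := by
  have hSeq : {x : ℝ | c ≤ |x|} = Iic (-c) ∪ Ici c := by
    ext x
    simp only [mem_setOf_eq, mem_union, mem_Iic, mem_Ici, le_abs]
    constructor
    · rintro (h | h); exacts [Or.inr h, Or.inl (by linarith)]
    · rintro (h | h); exacts [Or.inr (by linarith), Or.inl h]
  have hmeas : MeasurableSet {x : ℝ | c ≤ |x|} := by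
    rw [hSeq]; exact measurableSet_Iic.union measurableSet_Ici
  rw [laplaceMeasure, withDensity_apply _ hmeas, hSeq]
  refine le_trans (lintegral_union_le _ _ _) ?_
  have hIic : ∫⁻ x in Iic (-c), ENNReal.ofReal (1 / (2 * b) * Real.exp (-|x| / b))
      = ∫⁻ x in Ici c, ENNReal.ofReal (1 / (2 * b) * Real.exp (-|(-x)| / b)) := by
    have A : MeasurableEmbedding (fun x : ℝ => -x) :=
      (Homeomorph.neg ℝ).isClosedEmbedding.measurableEmbedding
    have hres : (volume : Measure ℝ).restrict (Iic (-c))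
        = Measure.map (fun x : ℝ => -x) ((volume : Measure ℝ).restrict (Ici c)) := by
      have hset : ((fun x : ℝ => -x) ⁻¹' Iic (-c) : Set ℝ) = Ici c := by
        ext x
        simp only [mem_preimage, mem_Iic, mem_Ici]
        constructor <;> intro h <;> linarith
      have hmapvol : Measure.map (fun x : ℝ => -x) volume = volume :=
        Measure.map_neg_eq_self (volume : Measure ℝ)
      have key := Measure.restrict_map (μ := (volume : Measure ℝ))
        (f := fun x : ℝ => -x) measurable_neg (measurableSet_Iic (a := -c))
      rw [hset, hmapvol] at key
      exact key
    rw [hres, lintegral_map (by measurability) measurable_neg]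
  rw [hIic]
  simp only [abs_neg]
  rw [laplace_piece b hb c hc, ← ENNReal.ofReal_add (by positivity) (by positivity)]
  apply ENNReal.ofReal_le_ofReal
  linarith [Real.exp_pos (-c / b)]

/-- Accuracy of the improved pan-private density estimator (OptBern): with
`t = tanh(ε/2)`, `X_i` i.i.d. `Bernoulli(d)`, `b_i` conditionally
`Bernoulli((1/2)(1 − t) + t·X_i)` given `X`, `L` an independent `Laplace(0, 1/(εm))`
random variable, and `d̃ = (1/t)((1/m)∑ b_i − (1/2)(1 − t)) + L`,
`P(|d̃ − d| ≥ α) ≤ 2e^{−2mα²(1−δ₁)²} + 2e^{−2mt²α²δ₁²(1−δ₂)²} + e^{−εmαδ₁δ₂}`. -/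
theorem stmt_12 {Ω : Type*} [MeasurableSpace Ω] (P : Measure Ω) [IsProbabilityMeasure P]
    (ε : ℝ) (hε0 : 0 < ε) (hε1 : ε ≤ 1 / 2) (m : ℕ) (hm : 1 ≤ m) (d : ℝ)
    (hd : d ∈ Set.Icc (0 : ℝ) 1) (α : ℝ) (hα : 0 < α)
    (δ₁ δ₂ : ℝ) (hδ₁ : δ₁ ∈ Set.Ioo (0 : ℝ) 1) (hδ₂ : δ₂ ∈ Set.Ioo (0 : ℝ) 1)
    (t : ℝ) (ht : t = Real.tanh (ε / 2))
    (X b : Fin m → Ω → ℝ) (L : Ω → ℝ)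
    (hXmeas : ∀ i, Measurable (X i)) (hbmeas : ∀ i, Measurable (b i))
    (hLmeas : Measurable L)
    (hX01 : ∀ i ω, X i ω = 0 ∨ X i ω = 1)
    (hb01 : ∀ i ω, b i ω = 0 ∨ b i ω = 1)
    -- marginal law of `X i`: Bernoulli(d)
    (hXdist : ∀ i, P {ω | X i ω = 1} = ENNReal.ofReal d)
    -- conditionally on `X i`, `b i` is Bernoulli((1/2)(1 − t) + t·X i)
    (hjoint1 : ∀ i, P {ω | X i ω = 1 ∧ b i ω = 1} =
      ENNReal.ofReal (d * ((1 / 2) * (1 + t))))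
    (hjoint0 : ∀ i, P {ω | X i ω = 0 ∧ b i ω = 1} =
      ENNReal.ofReal ((1 - d) * ((1 / 2) * (1 - t))))
    -- the pairs `(X i, b i)` are independent across `i`
    (hpairindep : iIndepFun
      (fun i ω => (X i ω, b i ω)) P)
    -- `L` is independent of all the pairs
    (hLindep : IndepFun L (fun ω => fun i => (X i ω, b i ω)) P)
    (hLlaw : Measure.map L P = laplaceMeasure (1 / (ε * m))) :
    P {ω | α ≤ |((1 / t) * ((1 / (m : ℝ)) * ∑ i, b i ω - (1 / 2) * (1 - t)) + L ω) - d|} ≤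
      ENNReal.ofReal
        (2 * Real.exp (-2 * m * α ^ 2 * (1 - δ₁) ^ 2) +
         2 * Real.exp (-2 * m * t ^ 2 * α ^ 2 * δ₁ ^ 2 * (1 - δ₂) ^ 2) +
         Real.exp (-(ε * m * α * δ₁ * δ₂))) := by
  obtain ⟨hd0, hd1⟩ := hd
  obtain ⟨hδ₁0, hδ₁1⟩ := hδ₁
  obtain ⟨hδ₂0, hδ₂1⟩ := hδ₂
  have hm0 : 0 < m := hm
  have hmR : (0:ℝ) < (m:ℝ) := by exact_mod_cast hm0
  have ht0 : 0 < t := by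
    rw [ht, Real.tanh_eq_sinh_div_cosh]
    exact div_pos (Real.sinh_pos_iff.2 (by linarith)) (Real.cosh_pos _)
  have ht1 : t < 1 := by
    rw [ht, Real.tanh_eq_sinh_div_cosh, div_lt_one (Real.cosh_pos _)]
    have := Real.cosh_sub_sinh (ε / 2)
    have := Real.exp_pos (-(ε / 2))
    linarith
  -- the two families of centered variables
  set Y1 : Fin m → Ω → ℝ :=
    fun i => (fun p : ℝ × ℝ => p.1 - d) ∘ (fun ω => (X i ω, b i ω)) with hY1def
  set Y2 : Fin m → Ω → ℝ :=
    fun i => (fun p : ℝ × ℝ => p.2 - ((1/2)*(1-t) + t * p.1)) ∘ (fun ω => (X i ω, b i ω))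
    with hY2def
  have hY1meas : ∀ i, Measurable (Y1 i) := fun i =>
    (measurable_fst.sub measurable_const).comp ((hXmeas i).prodMk (hbmeas i))
  have hY2meas : ∀ i, Measurable (Y2 i) := fun i =>
    (measurable_snd.sub (measurable_const.add (measurable_fst.const_mul t))).comp
      ((hXmeas i).prodMk (hbmeas i))
  have hY1indep : iIndepFun Y1 P :=
    hpairindep.comp (fun _ (p : ℝ × ℝ) => p.1 - d)
      (fun _ => measurable_fst.sub measurable_const)
  have hY2indep : iIndepFun Y2 P :=
    hpairindep.comp (fun _ (p : ℝ × ℝ) => p.2 - ((1/2)*(1-t) + t * p.1))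
      (fun _ => measurable_snd.sub (measurable_const.add (measurable_fst.const_mul t)))
  have hY1bdd : ∀ i ω, |Y1 i ω| ≤ 2 := by
    intro i ω
    show |X i ω - d| ≤ 2
    rcases hX01 i ω with h | h <;> rw [h] <;> rw [abs_le] <;> constructor <;> linarith
  have hY2bdd : ∀ i ω, |Y2 i ω| ≤ 2 := by
    intro i ω
    show |b i ω - ((1/2)*(1-t) + t * X i ω)| ≤ 2
    rcases hX01 i ω with h | h <;> rcases hb01 i ω with h' | h' <;> rw [h, h'] <;>
      rw [abs_le] <;> constructor <;> nlinarith
  have hmgf := fun i => mgf_bounds P (X i) (b i) (hXmeas i) (hbmeas i) (hX01 i) (hb01 i)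
    d t hd0 hd1 ht0.le ht1.le (hXdist i) (hjoint1 i) (hjoint0 i)
  have hY1mgf : ∀ i (l : ℝ), mgf (Y1 i) P l ≤ Real.exp (l ^ 2 / 8) := fun i => (hmgf i).1
  have hY2mgf : ∀ i (l : ℝ), mgf (Y2 i) P l ≤ Real.exp (l ^ 2 / 8) := fun i => (hmgf i).2
  -- thresholds
  set s1 : ℝ := (m:ℝ) * (α * (1 - δ₁)) with hs1def
  set s2 : ℝ := t * ((m:ℝ) * (α * (δ₁ * (1 - δ₂)))) with hs2def
  set c : ℝ := α * (δ₁ * δ₂) with hcdef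
  have hd1' : (0:ℝ) < 1 - δ₁ := by linarith
  have hd2' : (0:ℝ) < 1 - δ₂ := by linarith
  have hs1pos : 0 < s1 := by rw [hs1def]; positivity
  have hs2pos : 0 < s2 := by rw [hs2def]; positivity
  have hcpos : 0 < c := by rw [hcdef]; positivity
  -- event bounds
  have hE1 := chernoff_abs P hm0 Y1 hY1meas hY1indep hY1bdd hY1mgf s1 hs1pos.le
  have hE2 := chernoff_abs P hm0 Y2 hY2meas hY2indep hY2bdd hY2mgf s2 hs2pos.le
  have hE1' : P {ω | s1 ≤ |∑ i, Y1 i ω|} ≤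
      ENNReal.ofReal (2 * Real.exp (-2 * m * α ^ 2 * (1 - δ₁) ^ 2)) := by
    refine hE1.trans (le_of_eq ?_)
    congr 2
    rw [hs1def]
    field_simp
  have hE2' : P {ω | s2 ≤ |∑ i, Y2 i ω|} ≤
      ENNReal.ofReal (2 * Real.exp (-2 * m * t ^ 2 * α ^ 2 * δ₁ ^ 2 * (1 - δ₂) ^ 2)) := by
    refine hE2.trans (le_of_eq ?_)
    congr 2
    rw [hs2def]
    field_simp
  have hE3' : P {ω | c ≤ |L ω|} ≤ ENNReal.ofReal (Real.exp (-(ε * m * α * δ₁ * δ₂))) := by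
    have hS : MeasurableSet {x : ℝ | c ≤ |x|} :=
      measurableSet_le measurable_const measurable_id'.abs
    have hmap : P {ω | c ≤ |L ω|} = Measure.map L P {x : ℝ | c ≤ |x|} := by
      rw [Measure.map_apply hLmeas hS]
      rfl
    rw [hmap, hLlaw]
    have hb : (0:ℝ) < 1 / (ε * m) := by positivity
    refine (laplace_tail _ hb c hcpos).trans (le_of_eq ?_)
    congr 1
    rw [hcdef]
    field_simp
  -- sum decomposition identity
  have hid : ∀ ω, ((1 / t) * ((1 / (m:ℝ)) * ∑ i, b i ω - (1 / 2) * (1 - t)) + L ω) - d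
      = (1/(t*(m:ℝ))) * (∑ i, Y2 i ω) + (1/(m:ℝ)) * (∑ i, Y1 i ω) + L ω := by
    intro ω
    have h1 : ∑ i, Y1 i ω = (∑ i, X i ω) - (m:ℝ) * d := by
      have : ∀ i : Fin m, Y1 i ω = X i ω - d := fun i => rfl
      rw [Finset.sum_congr rfl (fun i _ => this i), Finset.sum_sub_distrib,
        Finset.sum_const, Finset.card_univ, Fintype.card_fin, nsmul_eq_mul]
    have h2 : ∑ i, Y2 i ω = (∑ i, b i ω) - ((m:ℝ) * ((1/2)*(1-t)) + t * ∑ i, X i ω) := by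
      have : ∀ i : Fin m, Y2 i ω = b i ω - ((1/2)*(1-t) + t * X i ω) := fun i => rfl
      rw [Finset.sum_congr rfl (fun i _ => this i), Finset.sum_sub_distrib,
        Finset.sum_add_distrib, Finset.sum_const, Finset.card_univ, Fintype.card_fin,
        nsmul_eq_mul, ← Finset.mul_sum]
    rw [h1, h2]
    field_simp
    ring
  -- union bound inclusion
  have hsubset : {ω | α ≤ |((1 / t) * ((1 / (m:ℝ)) * ∑ i, b i ω - (1 / 2) * (1 - t)) + L ω) - d|}
      ⊆ ({ω | s1 ≤ |∑ i, Y1 i ω|} ∪ {ω | s2 ≤ |∑ i, Y2 i ω|}) ∪ {ω | c ≤ |L ω|} := by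
    intro ω hω
    rw [Set.mem_setOf_eq, hid ω] at hω
    by_contra hn
    simp only [Set.mem_union, Set.mem_setOf_eq, not_or, not_le] at hn
    obtain ⟨⟨h1, h2⟩, h3⟩ := hn
    have hA : |(1/(t*(m:ℝ))) * (∑ i, Y2 i ω)| < α * (δ₁ * (1 - δ₂)) := by
      rw [abs_mul, abs_of_pos (show (0:ℝ) < 1/(t*(m:ℝ)) by positivity)]
      calc (1/(t*(m:ℝ))) * |∑ i, Y2 i ω| < (1/(t*(m:ℝ))) * s2 :=
            mul_lt_mul_of_pos_left h2 (by positivity)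
        _ = α * (δ₁ * (1 - δ₂)) := by rw [hs2def]; field_simp
    have hB : |(1/(m:ℝ)) * (∑ i, Y1 i ω)| < α * (1 - δ₁) := by
      rw [abs_mul, abs_of_pos (show (0:ℝ) < 1/(m:ℝ) by positivity)]
      calc (1/(m:ℝ)) * |∑ i, Y1 i ω| < (1/(m:ℝ)) * s1 :=
            mul_lt_mul_of_pos_left h1 (by positivity)
        _ = α * (1 - δ₁) := by rw [hs1def]; field_simp
    have htri : |(1/(t*(m:ℝ))) * (∑ i, Y2 i ω) + (1/(m:ℝ)) * (∑ i, Y1 i ω) + L ω|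
        ≤ |(1/(t*(m:ℝ))) * (∑ i, Y2 i ω)| + |(1/(m:ℝ)) * (∑ i, Y1 i ω)| + |L ω| :=
      (abs_add_le _ _).trans (add_le_add_left (abs_add_le _ _) _)
    have hsum : α * (δ₁ * (1 - δ₂)) + α * (1 - δ₁) + α * (δ₁ * δ₂) = α := by ring
    linarith
  calc P {ω | α ≤ |((1 / t) * ((1 / (m:ℝ)) * ∑ i, b i ω - (1 / 2) * (1 - t)) + L ω) - d|}
      ≤ P (({ω | s1 ≤ |∑ i, Y1 i ω|} ∪ {ω | s2 ≤ |∑ i, Y2 i ω|}) ∪ {ω | c ≤ |L ω|}) :=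
        measure_mono hsubset
    _ ≤ (P {ω | s1 ≤ |∑ i, Y1 i ω|} + P {ω | s2 ≤ |∑ i, Y2 i ω|}) + P {ω | c ≤ |L ω|} :=
        le_trans (measure_union_le _ _) (add_le_add_left (measure_union_le _ _) _)
    _ ≤ (ENNReal.ofReal (2 * Real.exp (-2 * m * α ^ 2 * (1 - δ₁) ^ 2)) +
          ENNReal.ofReal (2 * Real.exp (-2 * m * t ^ 2 * α ^ 2 * δ₁ ^ 2 * (1 - δ₂) ^ 2))) +
          ENNReal.ofReal (Real.exp (-(ε * m * α * δ₁ * δ₂))) :=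
        add_le_add (add_le_add hE1' hE2') hE3'
    _ = _ := by
        rw [← ENNReal.ofReal_add (by positivity) (by positivity),
          ← ENNReal.ofReal_add (by positivity) (by positivity)]
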